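/- (Lemma 1, exact form.) Let L be a positive natural number, q₁, q₂ > 0 reals, and T an invertible linear map on ℝ^L (e.g. a linear equivalence (Fin L → ℝ) ≃ₗ[ℝ] (Fin L → ℝ)). Let 𝒬₁, 𝒬₂ denote the quantize-dequantize maps with steps q₁, q₂ applied entrywise to vectors. Then for all I, J ∈ ℝ^L: 𝒬₁( T⁻¹ 𝒬₂( T (𝒬₁(I) − J) ) + J ) − I = 𝒬₁( T⁻¹ 𝒬₂( T (𝒬₁(I − 𝒬₁(J)) − (J − 𝒬₁(J))) ) + (J − 𝒬₁(J)) ) − (I − 𝒬₁(J)). In words: the reconstruction error of the predictive video-coding pipeline applied to the frame I with predictor J equals the reconstruction error of the same pipeline applied to the residue I − 𝒬₁(J) with predictor J − 𝒬₁(J). -/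

import Mathlib

/-- The quantize-dequantize map `𝒬_q(x) = q · round(x/q)`. -/
noncomputable def Qd (q x : ℝ) : ℝ := q * (round (x / q) : ℝ)

/-- Entrywise quantize-dequantize map on vectors in `ℝ^L`. -/
noncomputable def Qv (q : ℝ) {L : ℕ} (v : Fin L → ℝ) : Fin L → ℝ :=
  fun i => Qd q (v i)

lemma Qd_sub_Qd (q x y : ℝ) (hq : 0 < q) :
    Qd q (x - Qd q y) = Qd q x - Qd q y := by
  unfold Qd
  have hq' : q ≠ 0 := ne_of_gt hq
  have : (x - q * (round (y / q) : ℝ)) / q = x / q - (round (y / q) : ℝ) := by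
    field_simp
  rw [this, round_sub_intCast]
  push_cast
  ring

lemma Qv_sub_Qv {L : ℕ} (q : ℝ) (hq : 0 < q) (x y : Fin L → ℝ) :
    Qv q (x - Qv q y) = Qv q x - Qv q y := by
  funext i
  simpa [Qv] using Qd_sub_Qd q (x i) (y i) hq

/-- Lemma 1 (exact form): the reconstruction error of the predictive video-coding
pipeline applied to the frame `I` with predictor `J` equals the reconstruction error
of the same pipeline applied to the residue `I − 𝒬₁(J)` with predictor `J − 𝒬₁(J)`. -/
theorem frame_error_eq_residue_error (L : ℕ) (hL : 0 < L)
    (q₁ q₂ : ℝ) (hq₁ : 0 < q₁) (hq₂ : 0 < q₂)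
    (T : (Fin L → ℝ) ≃ₗ[ℝ] (Fin L → ℝ)) (I J : Fin L → ℝ) :
    Qv q₁ (T.symm (Qv q₂ (T (Qv q₁ I - J))) + J) - I =
      Qv q₁ (T.symm (Qv q₂ (T (Qv q₁ (I - Qv q₁ J) - (J - Qv q₁ J)))) + (J - Qv q₁ J))
        - (I - Qv q₁ J) := by
  have h1 : Qv q₁ (I - Qv q₁ J) - (J - Qv q₁ J) = Qv q₁ I - J := by
    rw [Qv_sub_Qv q₁ hq₁]; ring
  rw [h1]
  set X := T.symm (Qv q₂ (T (Qv q₁ I - J)))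
  have h2 : X + (J - Qv q₁ J) = (X + J) - Qv q₁ J := by ring
  rw [h2, Qv_sub_Qv q₁ hq₁]
  ring
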